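/- Let F_q be a finite field of characteristic 2, and let f : GSp(4,F_q) → ℂ be a function that is invariant under conjugation (f(ghg⁻¹) = f(h) for all g, h ∈ GSp(4,F_q)) and invariant under multiplication by scalar matrices (f(a·g) = f(g) for all a ∈ F_qˣ). Then for every X ∈ SL(2,F_q) the block matrix [[X, X],[0, X]] (4×4, in 2×2 blocks) lies in GSp(4,F_q), and ∑_{m ∈ M} f(mu) = (q−1)² · ∑_{X ∈ SL(2,F_q)} f([[X, X],[0, X]]). -/
import Mathlib


open Matrix

/-- The symplectic form `J`. -/
def Jmat (R : Type*) [CommRing R] : Matrix (Fin 4) (Fin 4) R :=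
  !![0, 0, 0, 1; 0, 0, 1, 0; 0, -1, 0, 0; -1, 0, 0, 0]

/-- `GSp(4,R)`: invertible matrices `g` with `gᵀ J g = μ(g) J` for some unit `μ(g)`. -/
def GSp4 (R : Type*) [CommRing R] : Set (Matrix (Fin 4) (Fin 4) R) :=
  {g | IsUnit g ∧ ∃ μ : Rˣ, gᵀ * Jmat R * g = (μ : R) • Jmat R}

/-- The set `M`: block matrices with rows `(a,b,0,0)`, `(c,d,0,0)`, `(0,0,λa,−λb)`,
`(0,0,−λc,λd)` with `λ` a unit and `ad − bc` a unit. -/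
def Mset (R : Type*) [CommRing R] : Set (Matrix (Fin 4) (Fin 4) R) :=
  {g | ∃ a b c d lam : R, IsUnit lam ∧ IsUnit (a * d - b * c) ∧
    g = !![a, b, 0, 0; c, d, 0, 0; 0, 0, lam * a, -(lam * b); 0, 0, -(lam * c), lam * d]}

/-- The element `u`. -/
def uEl (R : Type*) [CommRing R] : Matrix (Fin 4) (Fin 4) R :=
  !![0, 0, 1, 0; 0, 0, 0, -1; 1, 0, 0, 0; 0, -1, 0, 0]

/-- The block matrix `[[X, X], [0, X]]`. -/
def blkXX (R : Type*) [CommRing R] (X : Matrix (Fin 2) (Fin 2) R) :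
    Matrix (Fin 4) (Fin 4) R :=
  !![X 0 0, X 0 1, X 0 0, X 0 1;
     X 1 0, X 1 1, X 1 0, X 1 1;
     0, 0, X 0 0, X 0 1;
     0, 0, X 1 0, X 1 1]

theorem mul_fin_four {α} [NonUnitalNonAssocSemiring α]
    (a₁₁ a₁₂ a₁₃ a₁₄ a₂₁ a₂₂ a₂₃ a₂₄ a₃₁ a₃₂ a₃₃ a₃₄ a₄₁ a₄₂ a₄₃ a₄₄
     b₁₁ b₁₂ b₁₃ b₁₄ b₂₁ b₂₂ b₂₃ b₂₄ b₃₁ b₃₂ b₃₃ b₃₄ b₄₁ b₄₂ b₄₃ b₄₄ : α) :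
    !![a₁₁, a₁₂, a₁₃, a₁₄;
       a₂₁, a₂₂, a₂₃, a₂₄;
       a₃₁, a₃₂, a₃₃, a₃₄;
       a₄₁, a₄₂, a₄₃, a₄₄] * !![b₁₁, b₁₂, b₁₃, b₁₄;
       b₂₁, b₂₂, b₂₃, b₂₄;
       b₃₁, b₃₂, b₃₃, b₃₄;
       b₄₁, b₄₂, b₄₃, b₄₄] =
    !![a₁₁*b₁₁ + a₁₂*b₂₁ + a₁₃*b₃₁ + a₁₄*b₄₁, a₁₁*b₁₂ + a₁₂*b₂₂ + a₁₃*b₃₂ + a₁₄*b₄₂, a₁₁*b₁₃ + a₁₂*b₂₃ + a₁₃*b₃₃ + a₁₄*b₄₃, a₁₁*b₁₄ + a₁₂*b₂₄ + a₁₃*b₃₄ + a₁₄*b₄₄;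
       a₂₁*b₁₁ + a₂₂*b₂₁ + a₂₃*b₃₁ + a₂₄*b₄₁, a₂₁*b₁₂ + a₂₂*b₂₂ + a₂₃*b₃₂ + a₂₄*b₄₂, a₂₁*b₁₃ + a₂₂*b₂₃ + a₂₃*b₃₃ + a₂₄*b₄₃, a₂₁*b₁₄ + a₂₂*b₂₄ + a₂₃*b₃₄ + a₂₄*b₄₄;
       a₃₁*b₁₁ + a₃₂*b₂₁ + a₃₃*b₃₁ + a₃₄*b₄₁, a₃₁*b₁₂ + a₃₂*b₂₂ + a₃₃*b₃₂ + a₃₄*b₄₂, a₃₁*b₁₃ + a₃₂*b₂₃ + a₃₃*b₃₃ + a₃₄*b₄₃, a₃₁*b₁₄ + a₃₂*b₂₄ + a₃₃*b₃₄ + a₃₄*b₄₄;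
       a₄₁*b₁₁ + a₄₂*b₂₁ + a₄₃*b₃₁ + a₄₄*b₄₁, a₄₁*b₁₂ + a₄₂*b₂₂ + a₄₃*b₃₂ + a₄₄*b₄₂, a₄₁*b₁₃ + a₄₂*b₂₃ + a₄₃*b₃₃ + a₄₄*b₄₃, a₄₁*b₁₄ + a₄₂*b₂₄ + a₄₃*b₃₄ + a₄₄*b₄₄] := by
  ext i j
  fin_cases i <;> fin_cases j <;>
    simp [Matrix.mul_apply, dotProduct, Fin.sum_univ_succ, ← add_assoc]

theorem transpose_fin_four {α} (a₁₁ a₁₂ a₁₃ a₁₄ a₂₁ a₂₂ a₂₃ a₂₄ a₃₁ a₃₂ a₃₃ a₃₄ a₄₁ a₄₂ a₄₃ a₄₄ : α) :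
    (!![a₁₁, a₁₂, a₁₃, a₁₄;
       a₂₁, a₂₂, a₂₃, a₂₄;
       a₃₁, a₃₂, a₃₃, a₃₄;
       a₄₁, a₄₂, a₄₃, a₄₄])ᵀ =
    !![a₁₁, a₂₁, a₃₁, a₄₁;
       a₁₂, a₂₂, a₃₂, a₄₂;
       a₁₃, a₂₃, a₃₃, a₄₃;
       a₁₄, a₂₄, a₃₄, a₄₄] := by
  ext i j; fin_cases i <;> fin_cases j <;> rfl

theorem smul_fin_four {α} [Mul α] (c : α) (a₁₁ a₁₂ a₁₃ a₁₄ a₂₁ a₂₂ a₂₃ a₂₄ a₃₁ a₃₂ a₃₃ a₃₄ a₄₁ a₄₂ a₄₃ a₄₄ : α) :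
    c • (!![a₁₁, a₁₂, a₁₃, a₁₄;
       a₂₁, a₂₂, a₂₃, a₂₄;
       a₃₁, a₃₂, a₃₃, a₃₄;
       a₄₁, a₄₂, a₄₃, a₄₄]) =
    !![c*a₁₁, c*a₁₂, c*a₁₃, c*a₁₄;
       c*a₂₁, c*a₂₂, c*a₂₃, c*a₂₄;
       c*a₃₁, c*a₃₂, c*a₃₃, c*a₃₄;
       c*a₄₁, c*a₄₂, c*a₄₃, c*a₄₄] := by
  ext i j; fin_cases i <;> fin_cases j <;> rfl

theorem one_fin_four {α} [Zero α] [One α] :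
    (1 : Matrix (Fin 4) (Fin 4) α) = !![1,0,0,0;0,1,0,0;0,0,1,0;0,0,0,1] := by
  ext i j; fin_cases i <;> fin_cases j <;> simp [Matrix.one_apply] <;> rfl

theorem fin_four_eq {α} {a₁₁ a₁₂ a₁₃ a₁₄ a₂₁ a₂₂ a₂₃ a₂₄ a₃₁ a₃₂ a₃₃ a₃₄ a₄₁ a₄₂ a₄₃ a₄₄
     b₁₁ b₁₂ b₁₃ b₁₄ b₂₁ b₂₂ b₂₃ b₂₄ b₃₁ b₃₂ b₃₃ b₃₄ b₄₁ b₄₂ b₄₃ b₄₄ : α}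
    (h11 : a₁₁ = b₁₁) (h12 : a₁₂ = b₁₂) (h13 : a₁₃ = b₁₃) (h14 : a₁₄ = b₁₄)
    (h21 : a₂₁ = b₂₁) (h22 : a₂₂ = b₂₂) (h23 : a₂₃ = b₂₃) (h24 : a₂₄ = b₂₄)
    (h31 : a₃₁ = b₃₁) (h32 : a₃₂ = b₃₂) (h33 : a₃₃ = b₃₃) (h34 : a₃₄ = b₃₄)
    (h41 : a₄₁ = b₄₁) (h42 : a₄₂ = b₄₂) (h43 : a₄₃ = b₄₃) (h44 : a₄₄ = b₄₄) :
    !![a₁₁, a₁₂, a₁₃, a₁₄;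
       a₂₁, a₂₂, a₂₃, a₂₄;
       a₃₁, a₃₂, a₃₃, a₃₄;
       a₄₁, a₄₂, a₄₃, a₄₄] = !![b₁₁, b₁₂, b₁₃, b₁₄;
       b₂₁, b₂₂, b₂₃, b₂₄;
       b₃₁, b₃₂, b₃₃, b₃₄;
       b₄₁, b₄₂, b₄₃, b₄₄] := by
  subst_vars; rfl

section
set_option linter.unusedSectionVars false
variable {Fq : Type*} [Field Fq] [Fintype Fq] [CharP Fq 2]

def mEl (a b c d lam : Fq) : Matrix (Fin 4) (Fin 4) Fq :=
  !![a, b, 0, 0; c, d, 0, 0; 0, 0, lam * a, -(lam * b); 0, 0, -(lam * c), lam * d]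

lemma JJ : Jmat Fq * Jmat Fq = 1 := by
  have htwo : (2:Fq) = 0 := CharTwo.two_eq_zero
  rw [Jmat, mul_fin_four, one_fin_four]
  apply fin_four_eq <;> first | ring1 | linear_combination htwo | linear_combination -htwo

lemma mem_GSp4_of (g : Matrix (Fin 4) (Fin 4) Fq) (μ : Fq) (hμ : μ ≠ 0)
    (hJ : gᵀ * Jmat Fq * g = μ • Jmat Fq) : g ∈ GSp4 Fq := by
  have h1 : (μ⁻¹ • (Jmat Fq * gᵀ * Jmat Fq)) * g = 1 := by
    rw [smul_mul_assoc, mul_assoc, mul_assoc, ← mul_assoc gᵀ, hJ, mul_smul_comm, JJ,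
      smul_smul, inv_mul_cancel₀ hμ, one_smul]
  exact ⟨⟨⟨g, _, mul_eq_one_comm.mp h1, h1⟩, rfl⟩, Units.mk0 μ hμ, hJ⟩

lemma blk_mem (X : Matrix (Fin 2) (Fin 2) Fq) (hX : X.det = 1) : blkXX Fq X ∈ GSp4 Fq := by
  have htwo : (2:Fq) = 0 := CharTwo.two_eq_zero
  rw [Matrix.det_fin_two] at hX
  apply mem_GSp4_of _ 1 one_ne_zero
  rw [show blkXX Fq X = !![X 0 0, X 0 1, X 0 0, X 0 1;
     X 1 0, X 1 1, X 1 0, X 1 1;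
     0, 0, X 0 0, X 0 1;
     0, 0, X 1 0, X 1 1] from rfl, Jmat, transpose_fin_four, mul_fin_four, mul_fin_four,
     smul_fin_four]
  apply fin_four_eq <;>
    first
      | ring1
      | linear_combination hX
      | linear_combination -hX
      | linear_combination (X 0 0 * X 1 1) * htwo
      | linear_combination (X 0 1 * X 1 0) * htwo
      | linear_combination (X 0 0 * X 1 0) * htwo
      | linear_combination (X 0 1 * X 1 1) * htwo
      | linear_combination -(X 0 0 * X 1 1) * htwo
      | linear_combination -(X 0 1 * X 1 0) * htwo
      | linear_combination -(X 0 0 * X 1 0) * htwo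
      | linear_combination -(X 0 1 * X 1 1) * htwo
      | linear_combination hX + (X 0 1 * X 1 0) * htwo
      | linear_combination -hX - (X 0 1 * X 1 0) * htwo
      | linear_combination hX - (X 0 0 * X 1 1) * htwo
      | linear_combination -hX + (X 0 0 * X 1 1) * htwo
      | linear_combination -hX - (X 0 0 * X 1 0) * htwo
      | linear_combination -hX - (X 0 1 * X 1 1) * htwo
      | linear_combination hX + (X 0 0 * X 1 0) * htwo
      | linear_combination hX + (X 0 1 * X 1 1) * htwo
      | linear_combination -hX - (1 + X 0 0 * X 1 0 + X 0 1 * X 1 0) * htwo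
      | linear_combination -hX - (1 + X 0 1 * X 1 1 + X 0 1 * X 1 0) * htwo

lemma mu_mem (a b c d lam : Fq) (hlam : lam ≠ 0) (hd : a * d - b * c ≠ 0) :
    mEl a b c d lam * uEl Fq ∈ GSp4 Fq := by
  have htwo : (2:Fq) = 0 := CharTwo.two_eq_zero
  have hw : mEl a b c d lam * uEl Fq =
      !![0, 0, a, -b; 0, 0, c, -d; lam*a, lam*b, 0, 0; -(lam*c), -(lam*d), 0, 0] := by
    rw [mEl, uEl, mul_fin_four]; apply fin_four_eq <;> ring1
  rw [hw]
  apply mem_GSp4_of _ (lam * (a*d - b*c)) (mul_ne_zero hlam hd)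
  rw [Jmat, transpose_fin_four, mul_fin_four, mul_fin_four, smul_fin_four]
  apply fin_four_eq <;>
    first
    | ring1
    | linear_combination (lam*a*d) * htwo
    | linear_combination (lam*b*c) * htwo
    | linear_combination -(lam*a*d) * htwo
    | linear_combination -(lam*b*c) * htwo
    | linear_combination (lam*a*b) * htwo
    | linear_combination (lam*c*d) * htwo
    | linear_combination -(lam*a*b) * htwo
    | linear_combination -(lam*c*d) * htwo
end
-- fragment appended to t4 content
section
set_option linter.unusedSectionVars false
set_option linter.unreachableTactic false
set_option linter.unusedTactic false
variable {Fq : Type*} [Field Fq] [Fintype Fq] [CharP Fq 2]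

lemma sq_inj : Function.Injective (fun x : Fq => x * x) := by
  intro x y h
  simp only at h
  have h2 : (2:Fq) = 0 := CharTwo.two_eq_zero
  have h3 : (x + y) * (x + y) = 0 := by linear_combination h + (x*y + y*y) * h2
  have h4 := mul_self_eq_zero.mp h3
  rw [add_eq_zero_iff_eq_neg, CharTwo.neg_eq] at h4
  exact h4

lemma sq_surj : Function.Surjective (fun x : Fq => x * x) :=
  Finite.surjective_of_injective sq_inj

noncomputable def rt (x : Fq) : Fq := (sq_surj x).choose

lemma rt_mul_rt (x : Fq) : rt x * rt x = x := (sq_surj x).choose_spec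

lemma rt_ne_zero {x : Fq} (hx : x ≠ 0) : rt x ≠ 0 := by
  intro h; apply hx; rw [← rt_mul_rt x, h, mul_zero]

def gEl (c : Fq) : Matrix (Fin 4) (Fin 4) Fq := !![0,0,c,0;0,0,0,c;1,0,c,0;0,1,0,c]
def giEl (ci : Fq) : Matrix (Fin 4) (Fin 4) Fq := !![1,0,1,0;0,1,0,1;ci,0,0,0;0,ci,0,0]

lemma g_mul_gi {c ci : Fq} (hcc : c * ci = 1) : gEl c * giEl ci = 1 := by
  have htwo : (2:Fq) = 0 := CharTwo.two_eq_zero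
  rw [gEl, giEl, mul_fin_four, one_fin_four]
  apply fin_four_eq <;>
    first
    | ring1
    | linear_combination hcc
    | linear_combination hcc + htwo
    | linear_combination -hcc
    | linear_combination -hcc + htwo
    | linear_combination hcc - htwo

lemma g_mem {c : Fq} (hc : c ≠ 0) : gEl c ∈ GSp4 Fq := by
  have htwo : (2:Fq) = 0 := CharTwo.two_eq_zero
  apply mem_GSp4_of _ c hc
  rw [gEl, Jmat, transpose_fin_four, mul_fin_four, mul_fin_four, smul_fin_four]
  apply fin_four_eq <;>
    first
    | ring1
    | linear_combination htwo
    | linear_combination -htwo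
    | linear_combination c * htwo
    | linear_combination -c * htwo
    | linear_combination (c*c) * htwo
    | linear_combination -(c*c) * htwo

set_option maxHeartbeats 2000000 in
lemma conj_key (s lam c ci : Fq) (X : Matrix (Fin 2) (Fin 2) Fq)
    (hclam : c * lam = ci) :
    gEl c * (mEl (s * X 0 0) (s * X 0 1) (s * X 1 0) (s * X 1 1) lam * uEl Fq) * giEl ci =
      (ci * s) • blkXX Fq X := by
  have htwo : (2:Fq) = 0 := CharTwo.two_eq_zero
  rw [show mEl (s * X 0 0) (s * X 0 1) (s * X 1 0) (s * X 1 1) lam * uEl Fq =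
      !![0, 0, s * X 0 0, -(s * X 0 1); 0, 0, s * X 1 0, -(s * X 1 1);
         lam*(s * X 0 0), lam*(s * X 0 1), 0, 0;
         -(lam*(s * X 1 0)), -(lam*(s * X 1 1)), 0, 0] from by
    rw [mEl, uEl, mul_fin_four]; apply fin_four_eq <;> ring1]
  rw [gEl, giEl, mul_fin_four, mul_fin_four,
    show blkXX Fq X = !![X 0 0, X 0 1, X 0 0, X 0 1;
     X 1 0, X 1 1, X 1 0, X 1 1;
     0, 0, X 0 0, X 0 1;
     0, 0, X 1 0, X 1 1] from rfl, smul_fin_four]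
  apply fin_four_eq <;>
    first
    | ring1
    | linear_combination (s * X 0 0) * hclam
    | linear_combination (s * X 0 1) * hclam
    | linear_combination (s * X 1 0) * hclam
    | linear_combination (s * X 1 1) * hclam
    | linear_combination -((s * X 0 0) * hclam)
    | linear_combination -((s * X 0 1) * hclam)
    | linear_combination -((s * X 1 0) * hclam)
    | linear_combination -((s * X 1 1) * hclam)
    | linear_combination (s * X 0 0) * hclam + (ci * s * X 0 0) * htwo
    | linear_combination (s * X 0 1) * hclam + (ci * s * X 0 1) * htwo
    | linear_combination (s * X 1 0) * hclam + (ci * s * X 1 0) * htwo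
    | linear_combination (s * X 1 1) * hclam + (ci * s * X 1 1) * htwo
    | linear_combination -((s * X 0 0) * hclam) - (ci * s * X 0 0) * htwo
    | linear_combination -((s * X 0 1) * hclam) - (ci * s * X 0 1) * htwo
    | linear_combination -((s * X 1 0) * hclam) - (ci * s * X 1 0) * htwo
    | linear_combination -((s * X 1 1) * hclam) - (ci * s * X 1 1) * htwo
    | linear_combination (s * X 0 0) * hclam - (ci * s * X 0 0) * htwo
    | linear_combination (s * X 0 1) * hclam - (ci * s * X 0 1) * htwo
    | linear_combination (s * X 1 0) * hclam - (ci * s * X 1 0) * htwo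
    | linear_combination (s * X 1 1) * hclam - (ci * s * X 1 1) * htwo
    | linear_combination -((s * X 0 0) * hclam) + (ci * s * X 0 0) * htwo
    | linear_combination -((s * X 0 1) * hclam) + (ci * s * X 0 1) * htwo
    | linear_combination -((s * X 1 0) * hclam) + (ci * s * X 1 0) * htwo
    | linear_combination -((s * X 1 1) * hclam) + (ci * s * X 1 1) * htwo
end
section
set_option linter.unusedSectionVars false
variable {Fq : Type*} [Field Fq] [Fintype Fq] [CharP Fq 2]

lemma val_key (f : Matrix (Fin 4) (Fin 4) Fq → ℂ)
    (hconj : ∀ g h : Matrix (Fin 4) (Fin 4) Fq,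
      g ∈ GSp4 Fq → h ∈ GSp4 Fq → f (g * h * g⁻¹) = f h)
    (hscal : ∀ a : Fq, a ≠ 0 → ∀ g ∈ GSp4 Fq, f (a • g) = f g)
    (s lam : Fq) (X : Matrix (Fin 2) (Fin 2) Fq) (hs : s ≠ 0) (hlam : lam ≠ 0)
    (hX : X.det = 1) :
    f (mEl (s * X 0 0) (s * X 0 1) (s * X 1 0) (s * X 1 1) lam * uEl Fq) = f (blkXX Fq X) := by
  have hd : X 0 0 * X 1 1 - X 0 1 * X 1 0 = 1 := by rw [← Matrix.det_fin_two]; exact hX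
  set c := rt lam⁻¹ with hc
  have hcc : c * c = lam⁻¹ := rt_mul_rt _
  have hc0 : c ≠ 0 := rt_ne_zero (inv_ne_zero hlam)
  have h1 : c * (c * lam) = 1 := by rw [← mul_assoc, hcc]; exact inv_mul_cancel₀ hlam
  have hclam : c * lam = c⁻¹ := eq_inv_of_mul_eq_one_right h1
  have hci0 : c⁻¹ ≠ 0 := inv_ne_zero hc0
  have hdet : (s * X 0 0) * (s * X 1 1) - (s * X 0 1) * (s * X 1 0) = s * s := by
    linear_combination (s*s) * hd
  have hmuG : mEl (s * X 0 0) (s * X 0 1) (s * X 1 0) (s * X 1 1) lam * uEl Fq ∈ GSp4 Fq := by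
    apply mu_mem _ _ _ _ _ hlam
    rw [hdet]; exact mul_ne_zero hs hs
  have hgi : (gEl c)⁻¹ = giEl c⁻¹ := Matrix.inv_eq_right_inv (g_mul_gi (mul_inv_cancel₀ hc0))
  have h2 := hconj (gEl c) _ (g_mem hc0) hmuG
  rw [hgi, conj_key s lam c c⁻¹ X hclam] at h2
  rw [← h2]
  exact hscal _ (mul_ne_zero hci0 hs) _ (blk_mem X hX)
end

/-- Let `F_q` have characteristic 2 and let `f` be a conjugation-invariant,
scalar-invariant function on `GSp(4,F_q)`.  For every `X ∈ SL(2,F_q)` the block matrix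
`[[X,X],[0,X]]` lies in `GSp(4,F_q)`, and
`∑_{m ∈ M} f(mu) = (q−1)² ∑_{X ∈ SL(2,F_q)} f([[X,X],[0,X]])`. -/
theorem sum_over_Mu_eq_sum_over_SL2_char_two
    (Fq : Type*) [Field Fq] [Fintype Fq] (hchar : ringChar Fq = 2)
    (f : Matrix (Fin 4) (Fin 4) Fq → ℂ)
    (hconj : ∀ g h : Matrix (Fin 4) (Fin 4) Fq,
      g ∈ GSp4 Fq → h ∈ GSp4 Fq → f (g * h * g⁻¹) = f h)
    (hscal : ∀ a : Fq, a ≠ 0 → ∀ g ∈ GSp4 Fq, f (a • g) = f g) :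
    (∀ X : Matrix (Fin 2) (Fin 2) Fq, X.det = 1 → blkXX Fq X ∈ GSp4 Fq) ∧
    ∑ᶠ m ∈ Mset Fq, f (m * uEl Fq) =
      ((Fintype.card Fq : ℂ) - 1) ^ 2 *
        ∑ᶠ X ∈ {X : Matrix (Fin 2) (Fin 2) Fq | X.det = 1}, f (blkXX Fq X) := by
  haveI : CharP Fq 2 := by rw [← hchar]; exact ringChar.charP Fq
  classical
  refine ⟨fun X hX => blk_mem X hX, ?_⟩
  have hMfin : (Mset Fq).Finite := Set.toFinite _
  have hSfin : ({X : Matrix (Fin 2) (Fin 2) Fq | X.det = 1}).Finite := Set.toFinite _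
  rw [finsum_mem_eq_finite_toFinset_sum _ hMfin, finsum_mem_eq_finite_toFinset_sum _ hSfin]
  have key : ∑ p ∈ ((Finset.univ : Finset (Fqˣ × Fqˣ)) ×ˢ hSfin.toFinset),
      f (blkXX Fq p.2) = ∑ m ∈ hMfin.toFinset, f (m * uEl Fq) := by
    refine Finset.sum_bij
      (fun p _ => mEl ((p.1.1 : Fq) * p.2 0 0) ((p.1.1 : Fq) * p.2 0 1)
        ((p.1.1 : Fq) * p.2 1 0) ((p.1.1 : Fq) * p.2 1 1) (p.1.2 : Fq)) ?_ ?_ ?_ ?_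
    · rintro ⟨⟨s, lam⟩, X⟩ hp
      rw [Finset.mem_product, Set.Finite.mem_toFinset] at hp
      have hd : X 0 0 * X 1 1 - X 0 1 * X 1 0 = 1 := by
        rw [← Matrix.det_fin_two]; exact hp.2
      rw [Set.Finite.mem_toFinset]
      refine ⟨(s:Fq) * X 0 0, (s:Fq) * X 0 1, (s:Fq) * X 1 0, (s:Fq) * X 1 1, (lam:Fq),
        lam.isUnit, ?_, rfl⟩
      rw [show ((s:Fq) * X 0 0) * ((s:Fq) * X 1 1) - ((s:Fq) * X 0 1) * ((s:Fq) * X 1 0)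
          = (s:Fq) * (s:Fq) from by linear_combination ((s:Fq)*(s:Fq)) * hd]
      exact s.isUnit.mul s.isUnit
    · rintro ⟨⟨sp, lp⟩, Xp⟩ hp ⟨⟨sq, lq⟩, Xq⟩ hq heq
      rw [Finset.mem_product, Set.Finite.mem_toFinset] at hp hq
      have hdp : Xp 0 0 * Xp 1 1 - Xp 0 1 * Xp 1 0 = 1 := by
        rw [← Matrix.det_fin_two]; exact hp.2
      have hdq : Xq 0 0 * Xq 1 1 - Xq 0 1 * Xq 1 0 = 1 := by
        rw [← Matrix.det_fin_two]; exact hq.2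
      have E00 := congrFun (congrFun heq 0) 0
      have E01 := congrFun (congrFun heq 0) 1
      have E10 := congrFun (congrFun heq 1) 0
      have E11 := congrFun (congrFun heq 1) 1
      have E22 := congrFun (congrFun heq 2) 2
      have E23 := congrFun (congrFun heq 2) 3
      have E32 := congrFun (congrFun heq 3) 2
      have E33 := congrFun (congrFun heq 3) 3
      simp only [mEl] at E00 E01 E10 E11 E22 E23 E32 E33
      simp at E00 E01 E10 E11 E22 E23 E32 E33
      have htwo : (2:Fq) = 0 := CharTwo.two_eq_zero
      have hss : (sp:Fq) * sp = (sq:Fq) * sq := by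
        linear_combination ((sp:Fq) * Xp 1 1) * E00 + ((sq:Fq) * Xq 0 0) * E11
          - ((sp:Fq) * Xp 1 0) * E01 - ((sq:Fq) * Xq 0 1) * E10
          + ((sp:Fq)*(sp:Fq)) * hdp - ((sq:Fq)*(sq:Fq)) * hdq
          + ((sp:Fq)*(sp:Fq) - (sp:Fq)*(sp:Fq)*(Xp 1 1)*(Xp 0 0) + (sp:Fq)*(sp:Fq)*(Xp 1 0)*(Xp 0 1)
             - (sq:Fq)*(sq:Fq) + (sq:Fq)*(sq:Fq)*(Xq 0 0)*(Xq 1 1) - (sq:Fq)*(sq:Fq)*(Xq 0 1)*(Xq 1 0)) * htwo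
      have hs : (sp:Fq) = (sq:Fq) := sq_inj hss
      have hs0 : (sp:Fq) ≠ 0 := sp.ne_zero
      rw [← hs] at E00 E01 E10 E11 E22 E23 E32 E33
      have hX : Xp = Xq := by
        ext i j
        fin_cases i <;> fin_cases j
        · exact mul_left_cancel₀ hs0 E00
        · exact mul_left_cancel₀ hs0 E01
        · exact mul_left_cancel₀ hs0 E10
        · exact mul_left_cancel₀ hs0 E11
      rw [← hX] at E22 E23 E32 E33
      have hll : (lp:Fq) * lp * ((sp:Fq) * sp) = (lq:Fq) * lq * ((sp:Fq) * sp) := by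
        linear_combination ((lp:Fq) * (sp:Fq) * Xp 1 1) * E22 + ((lq:Fq) * (sp:Fq) * Xp 0 0) * E33
          - ((lp:Fq) * (sp:Fq) * Xp 1 0) * E23 - ((lq:Fq) * (sp:Fq) * Xp 0 1) * E32
          + ((lp:Fq)*lp*sp*sp - (lq:Fq)*lq*sp*sp) * hdp
          + ((lp:Fq)*lp*sp*sp - (lp:Fq)*lp*(sp:Fq)*sp*(Xp 1 1)*(Xp 0 0) + (lp:Fq)*lp*(sp:Fq)*sp*(Xp 1 0)*(Xp 0 1)
             + (sp:Fq)*sp*(Xp 1 1)*(lq:Fq)*lq*(Xp 0 0) - (sp:Fq)*sp*(lq:Fq)*lq - (sp:Fq)*sp*(lq:Fq)*lq*(Xp 1 0)*(Xp 0 1)) * htwo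
      have hl : (lp:Fq) = (lq:Fq) :=
        sq_inj (mul_right_cancel₀ (mul_ne_zero hs0 hs0) hll)
      simp only [Prod.mk.injEq]
      exact ⟨⟨Units.ext hs, Units.ext hl⟩, hX⟩
    · intro m hm
      rw [Set.Finite.mem_toFinset] at hm
      obtain ⟨a, b, c, d, lam, hlam, hdet, rfl⟩ := hm
      have hΔ : a * d - b * c ≠ 0 := hdet.ne_zero
      have hl0 : lam ≠ 0 := hlam.ne_zero
      have hss : rt (a*d - b*c) * rt (a*d - b*c) = a*d - b*c := rt_mul_rt _
      have hs0 : rt (a*d - b*c) ≠ 0 := rt_ne_zero hΔ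
      set s := rt (a*d - b*c) with hsdef
      have hdX : (!![s⁻¹*a, s⁻¹*b; s⁻¹*c, s⁻¹*d] : Matrix (Fin 2) (Fin 2) Fq).det = 1 := by
        rw [Matrix.det_fin_two_of]
        have htwo : (2:Fq) = 0 := CharTwo.two_eq_zero
        field_simp
        linear_combination hss + (a*d - b*c - s*s) * htwo
      refine ⟨((Units.mk0 s hs0, hlam.unit), !![s⁻¹*a, s⁻¹*b; s⁻¹*c, s⁻¹*d]), ?_, ?_⟩
      · rw [Finset.mem_product, Set.Finite.mem_toFinset]
        exact ⟨Finset.mem_univ _, hdX⟩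
      · have h1 : ∀ x : Fq, s * (s⁻¹ * x) = x := fun x => by
          rw [← mul_assoc, mul_inv_cancel₀ hs0, one_mul]
        simp only [mEl]
        simp only [IsUnit.unit_spec, Units.val_mk0]
        apply fin_four_eq <;> simp [h1]
    · rintro ⟨⟨s, lam⟩, X⟩ hp
      rw [Finset.mem_product, Set.Finite.mem_toFinset] at hp
      exact (val_key f hconj hscal (s:Fq) (lam:Fq) X s.ne_zero lam.ne_zero hp.2).symm
  rw [← key, Finset.sum_product]
  simp only [Finset.sum_const, Finset.card_univ, nsmul_eq_mul]
  have hc : ((Fintype.card (Fqˣ × Fqˣ) : ℕ) : ℂ) = ((Fintype.card Fq : ℂ) - 1)^2 := by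
    have h1 : (1:ℕ) ≤ Fintype.card Fq := Fintype.card_pos
    rw [Fintype.card_prod, Fintype.card_units, Nat.cast_mul, Nat.cast_sub h1, Nat.cast_one]
    ring
  rw [hc]
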